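/- Let σ > 0, 0 < k_min < k_max, b = (2σ k_min k_max − 1)/(σ(k_min + k_max)), and α* = −b + √(b² + 2/σ). Define ρ̃(α, k) = (2/σ)·((1 − ασk)/(α + 2k))². Then ρ̃(α*, k_min) = ρ̃(α*, k_max). -/

import Mathlib

theorem stmt_5 (σ : ℝ) (hσ : 0 < σ)
    (kmin kmax : ℝ) (hk : 0 < kmin) (hkk : kmin < kmax)
    (b α : ℝ)
    (hb : b = (2 * σ * kmin * kmax - 1) / (σ * (kmin + kmax)))
    (hα : α = -b + Real.sqrt (b ^ 2 + 2 / σ))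
    (ρ : ℝ → ℝ → ℝ)
    (hρ : ∀ a k, ρ a k = (2 / σ) * ((1 - a * σ * k) / (a + 2 * k)) ^ 2) :
    ρ α kmin = ρ α kmax := by
  have hsum : 0 < kmin + kmax := by linarith
  have hden : σ * (kmin + kmax) ≠ 0 := by positivity
  have hnn : (0:ℝ) ≤ b ^ 2 + 2 / σ := by positivity
  have hs : Real.sqrt (b ^ 2 + 2 / σ) ^ 2 = b ^ 2 + 2 / σ := Real.sq_sqrt hnn
  have hαpos : 0 < α := by
    have hlt : b ^ 2 < b ^ 2 + 2 / σ := by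
      have h2 : 0 < 2 / σ := by positivity
      linarith
    have h1 := Real.sqrt_lt_sqrt (by positivity : (0:ℝ) ≤ b ^ 2) hlt
    rw [Real.sqrt_sq_eq_abs] at h1
    have := abs_le.mp (le_of_lt h1)
    linarith [le_abs_self b]
  have key : α ^ 2 + 2 * b * α - 2 / σ = 0 := by
    have hab : α + b = Real.sqrt (b ^ 2 + 2 / σ) := by rw [hα]; ring
    have h2 : (α + b) ^ 2 = b ^ 2 + 2 / σ := by rw [hab]; exact hs
    nlinarith [h2]
  -- polynomial form of key, clearing b's denominator
  have key2 : σ * (kmin + kmax) * α ^ 2 + (4 * σ * kmin * kmax - 2) * α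
      - 2 * (kmin + kmax) = 0 := by
    have h2 : 2 * b * (σ * (kmin + kmax)) = 2 * (2 * σ * kmin * kmax - 1) := by
      rw [hb]; field_simp
    have h3 : 2 / σ * (σ * (kmin + kmax)) = 2 * (kmin + kmax) := by
      field_simp
    have := congrArg (· * (σ * (kmin + kmax))) key
    simp only [zero_mul] at this
    nlinarith [this, h2, h3]
  have hcross : (1 - α * σ * kmin) * (α + 2 * kmax)
      = -((1 - α * σ * kmax) * (α + 2 * kmin)) := by
    linear_combination -key2
  have d1 : α + 2 * kmin ≠ 0 := ne_of_gt (by linarith)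
  have d2 : α + 2 * kmax ≠ 0 := ne_of_gt (by linarith)
  have hsq : ((1 - α * σ * kmin) * (α + 2 * kmax)) ^ 2
      = ((1 - α * σ * kmax) * (α + 2 * kmin)) ^ 2 := by rw [hcross]; ring
  rw [hρ, hρ, div_pow, div_pow]
  field_simp
  linear_combination hsq
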